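/- Let n ≥ 2, a ≥ 0, and let φ : ℝ → ℝ be a differentiable function with φ(t) > a for all t, satisfying F(φ(t))·e^{φ(t)} = e^{nt}/n + F(a)e^a for all t, where F(s) = Σ_{k=0}^{n-1} (-1)^{n-k-1} (n-1)!/k! s^k, and satisfying φ^{n-1}φ' e^{φ} = e^{nt}. Then 0 < φ'(t) < n for all t. -/

import Mathlib

/-- Let `n ≥ 2`, `a ≥ 0`, and let `φ : ℝ → ℝ` be a differentiable function with `φ(t) > a`
for all `t`, satisfying `F(φ(t)) e^{φ(t)} = e^{nt}/n + F(a)e^a` for all `t`, where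
`F(s) = ∑_{k=0}^{n-1} (-1)^{n-k-1} (n-1)!/k! s^k`, and satisfying
`φ^{n-1} φ' e^{φ} = e^{nt}`. Then `0 < φ'(t) < n` for all `t`. -/
theorem statement3 (n : ℕ) (hn : 2 ≤ n) (a : ℝ) (ha : 0 ≤ a) (F : ℝ → ℝ)
    (hF : ∀ s : ℝ, F s =
      ∑ k ∈ Finset.range n,
        (-1 : ℝ) ^ (n - k - 1) * (Nat.factorial (n - 1) : ℝ) / (Nat.factorial k : ℝ) * s ^ k)
    (φ : ℝ → ℝ) (hφ : Differentiable ℝ φ) (hφa : ∀ t, a < φ t)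
    (himpl : ∀ t : ℝ, F (φ t) * Real.exp (φ t) = Real.exp (n * t) / n + F a * Real.exp a)
    (hode : ∀ t : ℝ, (φ t) ^ (n - 1) * deriv φ t * Real.exp (φ t) = Real.exp (n * t)) :
    ∀ t : ℝ, 0 < deriv φ t ∧ deriv φ t < n := by
  have hFfun : F = fun s : ℝ => ∑ k ∈ Finset.range n,
      (-1 : ℝ) ^ (n - k - 1) * (Nat.factorial (n - 1) : ℝ) / (Nat.factorial k : ℝ) * s ^ k :=
    funext hF
  subst hFfun
  set c : ℕ → ℝ := fun k =>
    (-1 : ℝ) ^ (n - k - 1) * (Nat.factorial (n - 1) : ℝ) / (Nat.factorial k : ℝ) with hc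
  -- derivative of F s * exp s is s^(n-1) * exp s
  have hFe : ∀ s : ℝ,
      HasDerivAt (fun s : ℝ => (∑ k ∈ Finset.range n, c k * s ^ k) * Real.exp s)
        (s ^ (n - 1) * Real.exp s) s := by
    intro s
    have hP : HasDerivAt (fun s : ℝ => ∑ k ∈ Finset.range n, c k * s ^ k)
        (∑ k ∈ Finset.range n, c k * (k * s ^ (k - 1))) s := by
      apply HasDerivAt.fun_sum
      intro k hk
      simpa [mul_comm, mul_assoc] using (hasDerivAt_pow k s).const_mul (c k)
    have hprod := hP.fun_mul (Real.hasDerivAt_exp s)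
    have hid : (∑ k ∈ Finset.range n, c k * (k * s ^ (k - 1))) * Real.exp s
        + (∑ k ∈ Finset.range n, c k * s ^ k) * Real.exp s
        = s ^ (n - 1) * Real.exp s := by
      have hsum : (∑ k ∈ Finset.range n, (c k * (k * s ^ (k - 1)) + c k * s ^ k))
          = s ^ (n - 1) := by
        have h := Finset.sum_range_sub
          (f := fun k : ℕ => if k = 0 then (0:ℝ) else c (k-1) * s ^ (k-1)) n
        have heq : ∀ k ∈ Finset.range n,
            c k * (k * s ^ (k - 1)) + c k * s ^ k
            = (if k+1 = 0 then (0:ℝ) else c (k+1-1) * s ^ (k+1-1))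
              - (if k = 0 then (0:ℝ) else c (k-1) * s ^ (k-1)) := by
          intro k hk
          rcases k with _ | j
          · simp
          · simp only [Nat.add_sub_cancel, if_neg (Nat.succ_ne_zero _),
              if_neg (Nat.succ_ne_zero _), Nat.succ_sub_one]
            have hjn : j + 1 < n := Finset.mem_range.mp hk
            have h1 : n - (j+1) - 1 + 1 = n - j - 1 := by omega
            have hcc : c (j+1) * (j+1 : ℝ) = - c j := by
              simp only [hc]
              rw [← h1, pow_succ]
              have h2 : (Nat.factorial (j+1) : ℝ) = (j+1) * Nat.factorial j := by
                push_cast [Nat.factorial_succ]; ring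
              rw [h2]
              have hj0 : (Nat.factorial j : ℝ) ≠ 0 := by positivity
              have hj1 : ((j:ℝ) + 1) ≠ 0 := by positivity
              field_simp
            have : c (j+1) * ((j+1 : ℕ) * s ^ j) = - (c j * s ^ j) := by
              push_cast
              calc c (j+1) * (((j:ℝ)+1) * s ^ j) = (c (j+1) * ((j:ℝ)+1)) * s ^ j := by ring
                _ = - (c j * s ^ j) := by rw [hcc]; ring
            rw [this]; ring
        rw [Finset.sum_congr rfl heq, h]
        have hn0 : n ≠ 0 := by omega
        have hcn : c (n-1) = 1 := by
          simp only [hc]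
          have : n - (n-1) - 1 = 0 := by omega
          rw [this]
          have : (Nat.factorial (n-1) : ℝ) ≠ 0 := by positivity
          field_simp
        simp [hn0, hcn]
      calc (∑ k ∈ Finset.range n, c k * (k * s ^ (k - 1))) * Real.exp s
            + (∑ k ∈ Finset.range n, c k * s ^ k) * Real.exp s
          = (∑ k ∈ Finset.range n, (c k * (k * s ^ (k - 1)) + c k * s ^ k)) * Real.exp s := by
            rw [Finset.sum_add_distrib]; ring
        _ = s ^ (n - 1) * Real.exp s := by rw [hsum]
    simpa [hid] using hprod
  -- G and its monotonicity
  set G : ℝ → ℝ := fun x => x ^ (n-1) * Real.exp x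
    - (∑ k ∈ Finset.range n, c k * x ^ k) * Real.exp x with hG
  have hGder : ∀ x : ℝ, HasDerivAt G (((n-1 : ℕ) : ℝ) * x ^ (n-1-1) * Real.exp x) x := by
    intro x
    have h1 : HasDerivAt (fun x : ℝ => x ^ (n-1) * Real.exp x)
        (((n-1 : ℕ) : ℝ) * x ^ (n-1-1) * Real.exp x + x ^ (n-1) * Real.exp x) x :=
      (hasDerivAt_pow (n-1) x).mul (Real.hasDerivAt_exp x)
    simpa using h1.fun_sub (hFe x)
  have hmono : StrictMonoOn G (Set.Ici a) := by
    apply strictMonoOn_of_deriv_pos (convex_Ici a)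
    · exact fun x _ => ((hGder x).differentiableAt.continuousAt.continuousWithinAt)
    · intro x hx
      rw [interior_Ici] at hx
      rw [(hGder x).deriv]
      have hx0 : 0 < x := lt_of_le_of_lt ha hx
      have hn1 : (0:ℝ) < ((n-1 : ℕ) : ℝ) := by
        have : 0 < n - 1 := by omega
        exact_mod_cast this
      positivity
  intro t
  have hsa : a < φ t := hφa t
  have hs0 : 0 < φ t := lt_of_le_of_lt ha hsa
  have hGlt : G a < G (φ t) := hmono Set.self_mem_Ici (le_of_lt hsa) hsa
  have ha2 : (0:ℝ) ≤ a ^ (n-1) * Real.exp a := by positivity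
  have h3 := himpl t
  simp only [hG] at hGlt
  have key : Real.exp (n*t)/n < (φ t) ^ (n-1) * Real.exp (φ t) := by
    simp only [hc] at hGlt h3 ⊢
    linarith
  have hpos : 0 < (φ t) ^ (n-1) * Real.exp (φ t) := by positivity
  have hode' := hode t
  have hexp : 0 < Real.exp (n*t) := Real.exp_pos _
  have hK : deriv φ t * ((φ t) ^ (n-1) * Real.exp (φ t)) = Real.exp (n*t) := by
    rw [← hode']; ring
  constructor
  · nlinarith [hK, hpos, hexp]
  · have hn0 : (0:ℝ) < n := by positivity
    have h5 : Real.exp (n*t) < ((φ t) ^ (n-1) * Real.exp (φ t)) * n :=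
      (div_lt_iff₀ hn0).mp key
    nlinarith [hK, hpos, h5]
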